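/- Let f : X → R be continuous and convex on a compact convex set X ⊆ R^n, let A ∈ R^{m×n}, and let b : U → R^m be affine on a compact interval-shaped set U ⊆ R^p. Assume F(u) = {x ∈ X : A x ≤ b(u)} is nonempty for all u ∈ U. Then the optimal value function φ : U → R, φ(u) = min_{x ∈ F(u)} f(x), is continuous on U. -/

import Mathlib

open Set Filter Topology


/-- Continuity of the optimal value function of the lower-level problem:
with `f` continuous and convex on the compact convex set `X`, `b` affine in `u`,
and `U` an interval-shaped (box) compact uncertainty set on which the feasible
set `F u = {x ∈ X : A x ≤ b u}` is nonempty, the value function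
`φ u = min_{x ∈ F u} f x` (written as an infimum) is continuous on `U`. -/
theorem optimal_value_function_continuous {m n p : ℕ}
    (X : Set (EuclideanSpace ℝ (Fin n))) (hXc : IsCompact X) (hXconv : Convex ℝ X)
    (f : EuclideanSpace ℝ (Fin n) → ℝ) (hfc : ContinuousOn f X)
    (hfconv : ConvexOn ℝ X f)
    (A : Matrix (Fin m) (Fin n) ℝ)
    (a c : Fin p → ℝ)
    (U : Set (EuclideanSpace ℝ (Fin p)))
    (hU : U = {u | ∀ i, u i ∈ Set.Icc (a i) (c i)})
    (B : Matrix (Fin m) (Fin p) ℝ) (b₀ : Fin m → ℝ)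
    (b : EuclideanSpace ℝ (Fin p) → Fin m → ℝ)
    (hb : ∀ u, b u = B.mulVec (fun j => u j) + b₀)
    (F : EuclideanSpace ℝ (Fin p) → Set (EuclideanSpace ℝ (Fin n)))
    (hF : ∀ u, F u = {x ∈ X | ∀ i, A.mulVec (fun j => x j) i ≤ b u i})
    (hne : ∀ u ∈ U, (F u).Nonempty)
    (φ : EuclideanSpace ℝ (Fin p) → ℝ)
    (hφ : ∀ u, φ u = sInf (f '' F u)) :
    ContinuousOn φ U := by
  -- continuity of the constraint functions
  have hgcont : ∀ i, Continuous fun x : EuclideanSpace ℝ (Fin n) =>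
      A.mulVec (fun j => x j) i := by
    intro i
    have h : (fun x : EuclideanSpace ℝ (Fin n) => A.mulVec (fun j => x j) i)
        = fun x => ∑ j, A i j * x j := by
      funext x; simp [Matrix.mulVec, dotProduct]
    rw [h]
    exact continuous_finset_sum _ fun j _ =>
      continuous_const.mul (EuclideanSpace.proj j).continuous
  have hbcont : ∀ i, Continuous fun v : EuclideanSpace ℝ (Fin p) => b v i := by
    intro i
    have h : (fun v : EuclideanSpace ℝ (Fin p) => b v i)
        = fun v => (∑ j, B i j * v j) + b₀ i := by
      funext v; rw [hb]; simp [Matrix.mulVec, dotProduct]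
    rw [h]
    exact (continuous_finset_sum _ fun j _ =>
      continuous_const.mul (EuclideanSpace.proj j).continuous).add continuous_const
  have hFsub : ∀ v, F v ⊆ X := by
    intro v x hx; rw [hF] at hx; exact hx.1
  have hFcpt : ∀ v, IsCompact (F v) := by
    intro v
    rw [hF]
    have h : {x ∈ X | ∀ i, A.mulVec (fun j => x j) i ≤ b v i}
        = X ∩ ⋂ i, {x | A.mulVec (fun j => x j) i ≤ b v i} := by
      ext x; simp [Set.mem_iInter]
    rw [h]
    exact hXc.inter_right (isClosed_iInter fun i =>
      isClosed_le (hgcont i) continuous_const)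
  -- attainment of the minimum
  have hmin : ∀ v ∈ U, ∃ x ∈ F v, f x = φ v ∧ ∀ y ∈ F v, f x ≤ f y := by
    intro v hv
    obtain ⟨x, hxF, hxmin⟩ := (hFcpt v).exists_isMinOn (hne v hv) (hfc.mono (hFsub v))
    have hlow : ∀ y ∈ F v, f x ≤ f y := fun y hy => isMinOn_iff.mp hxmin y hy
    refine ⟨x, hxF, ?_, hlow⟩
    rw [hφ]
    exact (IsLeast.csInf_eq ⟨Set.mem_image_of_mem f hxF, by
      rintro z ⟨y, hy, rfl⟩; exact hlow y hy⟩).symm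
  -- global bounds on f over X
  intro u hu
  have hXne : X.Nonempty := ((hne u hu).mono (hFsub u))
  obtain ⟨xM, hxMX, hxMmax⟩ := hXc.exists_isMaxOn hXne hfc
  obtain ⟨xm, hxmX, hxmmin⟩ := hXc.exists_isMinOn hXne hfc
  set M := f xM with hM
  set L := f xm with hL
  have hub : ∀ x ∈ X, f x ≤ M := fun x hx => isMaxOn_iff.mp hxMmax x hx
  have hlb : ∀ x ∈ X, L ≤ f x := fun x hx => isMinOn_iff.mp hxmmin x hx
  have hLM : L ≤ M := hub xm hxmX
  have hφub : ∀ v ∈ U, φ v ≤ M := by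
    intro v hv
    obtain ⟨x, hxF, hfx, -⟩ := hmin v hv
    rw [← hfx]; exact hub x (hFsub v hxF)
  have hφlb : ∀ v ∈ U, L ≤ φ v := by
    intro v hv
    obtain ⟨x, hxF, hfx, -⟩ := hmin v hv
    rw [← hfx]; exact hlb x (hFsub v hxF)
  have hbdd : ∀ v, BddBelow (f '' F v) := by
    intro v
    refine ⟨L, ?_⟩
    rintro z ⟨y, hy, rfl⟩; exact hlb y (hFsub v hy)
  -- coordinate bound
  have hcoord : ∀ (v w : EuclideanSpace ℝ (Fin p)) (i : Fin p),
      |v i - w i| ≤ dist v w := by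
    intro v w i
    have h1 : dist (v i) (w i) ≤ dist v w := by
      rw [EuclideanSpace.dist_eq]
      have h2 : dist (v i) (w i) = Real.sqrt (dist (v i) (w i) ^ 2) :=
        (Real.sqrt_sq dist_nonneg).symm
      rw [h2]
      exact Real.sqrt_le_sqrt
        (Finset.single_le_sum (f := fun j => dist (v j) (w j) ^ 2)
          (fun j _ => sq_nonneg _) (Finset.mem_univ i))
    rw [← Real.dist_eq]
    exact h1
  rw [Metric.continuousWithinAt_iff]
  intro ε hε
  -- lower semicontinuity:
  have lsc : ∃ δ > 0, ∀ v ∈ U, dist v u < δ → φ u - ε < φ v := by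
    by_contra hcon
    push_neg at hcon
    choose v hvU hvd hvφ using fun k : ℕ => hcon (1 / (k + 1)) (by positivity)
    choose x hxF hxφ hxmin using fun k => hmin (v k) (hvU k)
    obtain ⟨z, hzX, σ, hσmono, hσtend⟩ :=
      hXc.tendsto_subseq (fun k => hFsub (v k) (hxF k))
    have hvt : Tendsto v atTop (𝓝 u) := by
      refine tendsto_iff_dist_tendsto_zero.mpr ?_
      refine squeeze_zero (fun k => dist_nonneg) (fun k => (hvd k).le) ?_
      exact tendsto_one_div_add_atTop_nhds_zero_nat
    have hvσt : Tendsto (fun k => v (σ k)) atTop (𝓝 u) :=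
      hvt.comp hσmono.tendsto_atTop
    have hzF : z ∈ F u := by
      rw [hF]
      refine ⟨hzX, fun i => ?_⟩
      have h1 : Tendsto (fun k => A.mulVec (fun j => x (σ k) j) i) atTop
          (𝓝 (A.mulVec (fun j => z j) i)) := ((hgcont i).tendsto z).comp hσtend
      have h2 : Tendsto (fun k => b (v (σ k)) i) atTop (𝓝 (b u i)) :=
        ((hbcont i).tendsto u).comp hvσt
      refine le_of_tendsto_of_tendsto' h1 h2 (fun k => ?_)
      have := hxF (σ k)
      rw [hF] at this
      exact this.2 i
    have hft : Tendsto (fun k => f (x (σ k))) atTop (𝓝 (f z)) := by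
      refine (hfc z hzX).tendsto.comp ?_
      exact tendsto_nhdsWithin_iff.mpr
        ⟨hσtend, Filter.Eventually.of_forall fun k => hFsub _ (hxF _)⟩
    have hfz : f z ≤ φ u - ε := by
      refine le_of_tendsto hft (Filter.Eventually.of_forall fun k => ?_)
      rw [hxφ]; exact hvφ (σ k)
    have : φ u ≤ f z := by
      rw [hφ]
      exact csInf_le (hbdd u) (Set.mem_image_of_mem f hzF)
    linarith
  -- upper semicontinuity:
  have usc : ∃ δ > 0, ∀ v ∈ U, dist v u < δ → φ v < φ u + ε := by
    set t : ℝ := min (1 / 2) (ε / 2 / (M - L + 1)) with htdef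
    have hD : (0 : ℝ) < M - L + 1 := by linarith
    have ht0 : 0 < t := lt_min (by norm_num) (by positivity)
    have ht1 : t ≤ 1 / 2 := min_le_left _ _
    -- room in the box around u
    have hroom : ∃ δ₀ : ℝ, 0 < δ₀ ∧ ∀ i : Fin p,
        (a i < u i → δ₀ ≤ u i - a i) ∧ (u i < c i → δ₀ ≤ c i - u i) := by
      rcases isEmpty_or_nonempty (Fin p) with hp | hp
      · exact ⟨1, one_pos, fun i => (hp.false i).elim⟩
      · set r : Fin p → ℝ := fun i =>
          min (if a i < u i then u i - a i else 1)
              (if u i < c i then c i - u i else 1) with hr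
        refine ⟨Finset.univ.inf' Finset.univ_nonempty r, ?_, fun i => ⟨?_, ?_⟩⟩
        · rw [Finset.lt_inf'_iff]
          intro i _
          refine lt_min ?_ ?_ <;> split <;> linarith
        · intro h
          refine le_trans (Finset.inf'_le r (Finset.mem_univ i)) ?_
          exact le_trans (min_le_left _ _) (by rw [if_pos h])
        · intro h
          refine le_trans (Finset.inf'_le r (Finset.mem_univ i)) ?_
          exact le_trans (min_le_right _ _) (by rw [if_pos h])
    obtain ⟨δ₀, hδ₀, hroom⟩ := hroom
    refine ⟨t * δ₀, by positivity, fun v hv hvd => ?_⟩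
    have hvi : ∀ i, |v i - u i| < t * δ₀ :=
      fun i => lt_of_le_of_lt (hcoord v u i) hvd
    -- the auxiliary point w
    set w : EuclideanSpace ℝ (Fin p) := u + t⁻¹ • (v - u) with hwdef
    have hwi : ∀ i, w i = u i + t⁻¹ * (v i - u i) := by
      intro i; rw [hwdef]
      simp [PiLp.add_apply, PiLp.smul_apply, PiLp.sub_apply, smul_eq_mul]
    have hwU : w ∈ U := by
      rw [hU]
      intro i
      have hui := hU ▸ hu
      have hvI := hU ▸ hv
      have hu1 := (hui i).1; have hu2 := (hui i).2
      have hv1 := (hvI i).1; have hv2 := (hvI i).2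
      rw [hwi i]
      constructor
      · rcases le_or_gt (u i) (v i) with h | h
        · have : 0 ≤ t⁻¹ * (v i - u i) := mul_nonneg (by positivity) (by linarith)
          linarith
        · have ha : a i < u i := lt_of_le_of_lt hv1 h
          have h1 : u i - v i < t * δ₀ := by
            have := hvi i; rw [abs_sub_comm, abs_of_pos (by linarith : 0 < u i - v i)] at this
            linarith
          have h2 : δ₀ ≤ u i - a i := (hroom i).1 ha
          have h3 : t⁻¹ * (u i - v i) < δ₀ := by
            rw [← mul_lt_mul_iff_right₀ ht0, ← mul_assoc, mul_inv_cancel₀ ht0.ne', one_mul]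
            exact h1
          nlinarith
      · rcases le_or_gt (v i) (u i) with h | h
        · have : t⁻¹ * (v i - u i) ≤ 0 := by
            apply mul_nonpos_of_nonneg_of_nonpos (by positivity); linarith
          linarith
        · have hc : u i < c i := lt_of_lt_of_le h hv2
          have h1 : v i - u i < t * δ₀ := by
            have := hvi i; rw [abs_of_pos (by linarith : 0 < v i - u i)] at this
            linarith
          have h2 : δ₀ ≤ c i - u i := (hroom i).2 hc
          have h3 : t⁻¹ * (v i - u i) < δ₀ := by
            rw [← mul_lt_mul_iff_right₀ ht0, ← mul_assoc, mul_inv_cancel₀ ht0.ne', one_mul]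
            exact h1
          nlinarith
    have hveq : v = (1 - t) • u + t • w := by
      rw [hwdef, smul_add, smul_smul, mul_inv_cancel₀ ht0.ne', one_smul]
      module
    -- combine minimizers
    obtain ⟨xu, hxuF, hxuφ, -⟩ := hmin u hu
    obtain ⟨xw, hxwF, hxwφ, -⟩ := hmin w hwU
    have hxuX : xu ∈ X := hFsub u hxuF
    have hxwX : xw ∈ X := hFsub w hxwF
    set y : EuclideanSpace ℝ (Fin n) := (1 - t) • xu + t • xw with hydef
    have hyX : y ∈ X := hXconv hxuX hxwX (by linarith) ht0.le (by ring)
    have hyF : y ∈ F v := by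
      rw [hF]
      refine ⟨hyX, fun i => ?_⟩
      have hyc : (fun j => y j) = (1 - t) • (fun j => xu j) + t • (fun j => xw j) := by
        funext j; rw [hydef]; simp
      have hvc : (fun j => v j) = (1 - t) • (fun j => u j) + t • (fun j => w j) := by
        funext j; rw [hveq]; simp
      have hAy : A.mulVec (fun j => y j) i
          = (1 - t) * A.mulVec (fun j => xu j) i + t * A.mulVec (fun j => xw j) i := by
        rw [hyc, Matrix.mulVec_add, Matrix.mulVec_smul, Matrix.mulVec_smul]
        simp [smul_eq_mul]
      have hbv : b v i = (1 - t) * b u i + t * b w i := by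
        rw [hb, hb, hb, hvc, Matrix.mulVec_add, Matrix.mulVec_smul, Matrix.mulVec_smul]
        simp only [Pi.add_apply, Pi.smul_apply, smul_eq_mul]
        ring
      rw [hAy, hbv]
      have h1 := (hF u ▸ hxuF).2 i
      have h2 := (hF w ▸ hxwF).2 i
      have h3 : (0:ℝ) ≤ 1 - t := by linarith
      exact add_le_add (mul_le_mul_of_nonneg_left h1 h3)
        (mul_le_mul_of_nonneg_left h2 ht0.le)
    have hfy : f y ≤ (1 - t) * f xu + t * f xw := by
      have := hfconv.2 hxuX hxwX (by linarith : (0:ℝ) ≤ 1 - t) ht0.le (by ring)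
      simpa [smul_eq_mul] using this
    have hφv : φ v ≤ f y := by
      rw [hφ]
      exact csInf_le (hbdd v) (Set.mem_image_of_mem f hyF)
    have hφwM : φ w ≤ M := hφub w hwU
    have hφuL : L ≤ φ u := hφlb u hu
    have ht2 : t ≤ ε / 2 / (M - L + 1) := min_le_right _ _
    have hkey : t * (M - L) ≤ ε / 2 := by
      have h1 : t * (M - L + 1) ≤ ε / 2 := by
        rw [← le_div_iff₀ hD]; exact ht2
      nlinarith
    calc φ v ≤ f y := hφv
      _ ≤ (1 - t) * f xu + t * f xw := hfy
      _ = (1 - t) * φ u + t * φ w := by rw [hxuφ, hxwφ]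
      _ = φ u + t * (φ w - φ u) := by ring
      _ ≤ φ u + t * (M - L) := by nlinarith
      _ ≤ φ u + ε / 2 := by linarith
      _ < φ u + ε := by linarith
  obtain ⟨δ₁, hδ₁, hlsc⟩ := lsc
  obtain ⟨δ₂, hδ₂, husc⟩ := usc
  refine ⟨min δ₁ δ₂, lt_min hδ₁ hδ₂, fun v hv hvd => ?_⟩
  rw [Real.dist_eq, abs_lt]
  constructor
  · have := hlsc v hv (lt_of_lt_of_le hvd (min_le_left _ _)); linarith
  · have := husc v hv (lt_of_lt_of_le hvd (min_le_right _ _)); linarith
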